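/- Let p be a prime, u, m, n natural numbers with p ∤ u, m ≥ 2 if p = 2, and k = 1 + u·p^m. Let i ≥ 0 and suppose ĩ, k′ ∈ ℕ satisfy S(k, ĩ) ≡ i (mod p^n) and k·k′ ≡ 1 (mod p^n), with ĩ ≥ 1. Then S(k, ĩ − 1) − S(k, p^n − 1) ≡ k′·i (mod p^n). -/
import Mathlib


/-- `S x i = 1 + x + ⋯ + x^(i-1)`, with `S x 0 = 0`. -/
def S (x i : ℕ) : ℕ := ∑ t ∈ Finset.range i, x ^ t

lemma S_add (x a b : ℕ) : S x (a + b) = S x a + x ^ a * S x b := by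
  simp [S, Finset.sum_range_add, pow_add, Finset.mul_sum]

lemma S_mul (x a b : ℕ) : S x (a * b) = S x a * S (x ^ a) b := by
  induction b with
  | zero => simp [S]
  | succ b ih =>
      rw [Nat.mul_succ, S_add, ih]
      have : S (x ^ a) (b + 1) = S (x ^ a) b + (x ^ a) ^ b := by
        simp [S, Finset.sum_range_succ]
      rw [this, ← pow_mul]
      ring

lemma S_one (x : ℕ) : S x 1 = 1 := by simp [S]

lemma S_succ_int (x j : ℕ) : (S x (j + 1) : ℤ) = x * S x j + 1 := by
  rw [add_comm j 1, S_add, S_one]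
  push_cast
  ring

lemma p_dvd_S {p x : ℕ} (hx : (p : ℤ) ∣ (x : ℤ) - 1) : (p : ℤ) ∣ (S x p : ℤ) := by
  have h : (p : ℤ) ∣ (S x p : ℤ) - p := by
    have : (S x p : ℤ) - p = ∑ t ∈ Finset.range p, ((x : ℤ) ^ t - 1) := by
      simp [S, Finset.sum_sub_distrib]
    rw [this]
    refine Finset.dvd_sum fun t _ => hx.trans ?_
    simpa using sub_dvd_pow_sub_pow (x : ℤ) 1 t
  have := dvd_add h (dvd_refl (p : ℤ))
  simpa using this

lemma pow_dvd_S {p k : ℕ} (hk : (p : ℤ) ∣ (k : ℤ) - 1) (n : ℕ) :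
    (p : ℤ) ^ n ∣ (S k (p ^ n) : ℤ) := by
  induction n with
  | zero => simp [S_one]
  | succ n ih =>
      have : S k (p ^ (n + 1)) = S k (p ^ n) * S (k ^ p ^ n) p := by
        rw [pow_succ, S_mul]
      rw [this, pow_succ]
      push_cast
      refine mul_dvd_mul ih (p_dvd_S ?_)
      have : (p : ℤ) ∣ (k : ℤ) ^ p ^ n - 1 ^ p ^ n :=
        hk.trans (by simpa using sub_dvd_pow_sub_pow (k : ℤ) 1 (p ^ n))
      simpa using this

theorem stmt_9 (p u m n : ℕ) (hp : p.Prime) (hu : ¬ p ∣ u) (hm : 0 < m)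
    (hp2 : p = 2 → 2 ≤ m) (k : ℕ) (hk : k = 1 + u * p ^ m)
    (i itil k' : ℕ) (hitil : 1 ≤ itil)
    (h1 : S k itil ≡ i [MOD p ^ n]) (h2 : k * k' ≡ 1 [MOD p ^ n]) :
    Int.ModEq ((p : ℤ) ^ n) ((S k (itil - 1) : ℤ) - (S k (p ^ n - 1) : ℤ)) ((k' : ℤ) * (i : ℤ)) := by
  have hk1 : (p : ℤ) ∣ (k : ℤ) - 1 := by
    subst hk; push_cast
    have hpm : (p : ℤ) ^ m = p * p ^ (m - 1) := by
      rw [← pow_succ']; congr 1; omega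
    exact ⟨u * p ^ (m - 1), by rw [hpm]; ring⟩
  have hSdvd : (p : ℤ) ^ n ∣ (S k (p ^ n) : ℤ) := pow_dvd_S hk1 n
  have hpn : ((p ^ n : ℕ) : ℤ) = (p : ℤ) ^ n := by push_cast; ring
  have h1' : (S k itil : ℤ) ≡ (i : ℤ) [ZMOD ((p:ℤ)^n)] := by
    rw [← hpn]; exact Int.natCast_modEq_iff.mpr h1
  have h2' : (k : ℤ) * (k' : ℤ) ≡ 1 [ZMOD ((p:ℤ)^n)] := by
    have := Int.natCast_modEq_iff.mpr h2
    rw [← hpn]; push_cast at this ⊢; exact this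
  set A : ℤ := (S k (itil - 1) : ℤ)
  set B : ℤ := (S k (p ^ n - 1) : ℤ)
  have hpn1 : 1 ≤ p ^ n := Nat.one_le_pow _ _ hp.pos
  have hA : (k : ℤ) * A + 1 = (S k itil : ℤ) := by
    rw [← S_succ_int, Nat.sub_add_cancel hitil]
  have hB : (k : ℤ) * B + 1 = (S k (p ^ n) : ℤ) := by
    rw [← S_succ_int, Nat.sub_add_cancel hpn1]
  have key : (k : ℤ) * (A - B) ≡ (i : ℤ) [ZMOD ((p:ℤ)^n)] := by
    have h0 : (S k (p ^ n) : ℤ) ≡ 0 [ZMOD ((p:ℤ)^n)] :=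
      Int.modEq_zero_iff_dvd.mpr hSdvd
    calc (k : ℤ) * (A - B) = ((k : ℤ) * A + 1) - ((k : ℤ) * B + 1) := by ring
    _ = (S k itil : ℤ) - (S k (p ^ n) : ℤ) := by rw [hA, hB]
    _ ≡ (i : ℤ) - 0 [ZMOD ((p:ℤ)^n)] := h1'.sub h0
    _ = (i : ℤ) := by ring
  calc A - B = 1 * (A - B) := by ring
  _ ≡ ((k : ℤ) * k') * (A - B) [ZMOD ((p:ℤ)^n)] := (h2'.mul_right _).symm
  _ = (k' : ℤ) * ((k : ℤ) * (A - B)) := by ring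
  _ ≡ (k' : ℤ) * (i : ℤ) [ZMOD ((p:ℤ)^n)] := key.mul_left _
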